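/- Let r ≥ 3 be an integer, ζ a primitive 2^r-th root of unity in ℂ, and K = ℚ(ζ + ζ^{-1}). For every integer k: Tr_{K/ℚ}(ζ^k + ζ^{-k}) = 0 if gcd(k, 2^r) < 2^{r-1}; Tr_{K/ℚ}(ζ^k + ζ^{-k}) = -2^{r-1} if gcd(k, 2^r) = 2^{r-1}; and Tr_{K/ℚ}(ζ^k + ζ^{-k}) = 2^{r-1} if gcd(k, 2^r) = 2^r (i.e. 2^r divides k). -/

import Mathlib

set_option maxHeartbeats 1000000
set_option synthInstance.maxHeartbeats 400000

open scoped IntermediateField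
open IntermediateField Polynomial

private lemma geomAux {η : ℂ} (h1 : η ≠ 1) {m : ℕ} (hm : η ^ m = 1) :
    ∑ a ∈ Finset.range m, η ^ a = 0 := by
  rw [geom_sum_eq h1, hm, sub_self, zero_div]

private lemma sum_primroots_zpow (r : ℕ) (hr : 3 ≤ r) {ζ : ℂ}
    (hζ : IsPrimitiveRoot ζ (2 ^ r)) (k : ℤ) :
    ∑ μ ∈ primitiveRoots (2 ^ r) ℂ, μ ^ k =
      if (2 ^ r : ℤ) ∣ k then ((2 : ℂ) ^ (r - 1))
      else if (2 ^ (r - 1) : ℤ) ∣ k then -((2 : ℂ) ^ (r - 1)) else 0 := by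
  have h2r : (2 : ℕ) ^ r = 2 * 2 ^ (r - 1) := by
    conv_lhs => rw [show r = (r - 1) + 1 by omega]
    ring
  have h2rz : (2 : ℤ) ^ r = 2 * 2 ^ (r - 1) := by exact_mod_cast h2r
  have hpos : (0 : ℕ) < 2 ^ r := pow_pos (by norm_num) r
  have hζ0 : ζ ≠ 0 := hζ.ne_zero hpos.ne'
  have hmemimg : ∀ a ∈ Finset.range (2 ^ (r - 1)),
      ζ ^ (2 * a + 1) ∈ primitiveRoots (2 ^ r) ℂ := by
    intro a _
    rw [mem_primitiveRoots hpos]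
    refine hζ.pow_of_coprime _ ?_
    exact Nat.Coprime.pow_right _
      (Nat.coprime_comm.mp ((Nat.prime_two.coprime_iff_not_dvd).mpr (by omega)))
  have hinj : ∀ a ∈ Finset.range (2 ^ (r - 1)), ∀ b ∈ Finset.range (2 ^ (r - 1)),
      ζ ^ (2 * a + 1) = ζ ^ (2 * b + 1) → a = b := by
    intro a ha b hb hab
    simp only [Finset.mem_range] at ha hb
    have := hζ.pow_inj (i := 2 * a + 1) (j := 2 * b + 1) (by omega) (by omega) hab
    omega
  have himg : primitiveRoots (2 ^ r) ℂ =
      (Finset.range (2 ^ (r - 1))).image (fun a => ζ ^ (2 * a + 1)) := by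
    refine (Finset.eq_of_subset_of_card_le ?_ ?_).symm
    · intro μ hμ
      obtain ⟨a, ha, rfl⟩ := Finset.mem_image.mp hμ
      exact hmemimg a ha
    · rw [Finset.card_image_of_injOn hinj, Finset.card_range,
        Complex.card_primitiveRoots, Nat.totient_prime_pow Nat.prime_two (by omega)]
      simp
  rw [himg, Finset.sum_image hinj]
  have hterm : ∀ a : ℕ, (ζ ^ (2 * a + 1)) ^ k = (ζ ^ (2 * k)) ^ a * ζ ^ k := by
    intro a
    rw [← zpow_natCast ζ (2 * a + 1), ← zpow_mul, ← zpow_natCast (ζ ^ (2 * k)) a,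
      ← zpow_mul, ← zpow_add₀ hζ0]
    congr 1
    push_cast
    ring
  simp only [hterm]
  rw [← Finset.sum_mul]
  have hone : ζ ^ ((2 : ℤ) ^ r) = 1 := by
    have := hζ.pow_eq_one
    rw [← zpow_natCast ζ (2 ^ r)] at this
    simpa using this
  by_cases hdvd : (2 ^ (r - 1) : ℤ) ∣ k
  · obtain ⟨t, rfl⟩ := hdvd
    have heta : ζ ^ ((2 : ℤ) * (2 ^ (r - 1) * t)) = 1 := by
      rw [show (2 : ℤ) * (2 ^ (r - 1) * t) = (2 ^ r : ℤ) * t by rw [h2rz]; ring,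
        zpow_mul, hone, one_zpow]
    rw [heta]
    simp only [one_pow, Finset.sum_const, Finset.card_range, nsmul_eq_mul, mul_one]
    have h2rm1 : ζ ^ ((2 : ℤ) ^ (r - 1)) = -1 := by
      have hsq : ζ ^ ((2 : ℤ) ^ (r - 1)) * ζ ^ ((2 : ℤ) ^ (r - 1)) = 1 := by
        rw [← zpow_add₀ hζ0,
          show (2 : ℤ) ^ (r - 1) + 2 ^ (r - 1) = 2 ^ r by rw [h2rz]; ring, hone]
      rcases mul_self_eq_one_iff.mp hsq with h | h
      · exfalso
        have hne := hζ.pow_ne_one_of_pos_of_lt (l := 2 ^ (r - 1))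
          (pow_pos (by norm_num) _).ne' (by omega)
        rw [← zpow_natCast ζ (2 ^ (r - 1))] at hne
        exact hne (by exact_mod_cast h)
      · exact h
    have hζk : ζ ^ ((2 : ℤ) ^ (r - 1) * t) = (-1 : ℂ) ^ t := by
      rw [zpow_mul, h2rm1]
    rw [hζk]
    by_cases ht2 : (2 : ℤ) ∣ t
    · obtain ⟨s, rfl⟩ := ht2
      rw [if_pos ⟨s, by rw [h2rz]; ring⟩, Even.neg_one_zpow ⟨s, by ring⟩]
      push_cast
      ring
    · rw [if_neg, if_pos ⟨t, rfl⟩, Odd.neg_one_zpow (Int.not_even_iff_odd.mp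
        (fun he => ht2 he.two_dvd))]
      · push_cast
        ring
      · rintro ⟨s, hs⟩
        refine ht2 ⟨s, ?_⟩
        have h1 : (2 : ℤ) ^ (r - 1) * t = 2 ^ (r - 1) * (2 * s) := by
          rw [hs, h2rz]; ring
        exact mul_left_cancel₀ (by positivity) h1
  · have hne1 : ζ ^ ((2 : ℤ) * k) ≠ 1 := by
      intro h
      have := (hζ.zpow_eq_one_iff_dvd (2 * k)).mp h
      push_cast [h2r] at this
      exact hdvd ((mul_dvd_mul_iff_left (two_ne_zero (α := ℤ))).mp
        (by rw [← h2rz] at this ⊢; exact h2rz ▸ this))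
    have hpow1 : (ζ ^ ((2 : ℤ) * k)) ^ (2 ^ (r - 1) : ℕ) = 1 := by
      rw [← zpow_natCast (ζ ^ ((2 : ℤ) * k)), ← zpow_mul,
        show (2 : ℤ) * k * ((2 ^ (r - 1) : ℕ) : ℤ) = (2 : ℤ) ^ r * k by
          push_cast [h2rz]; ring,
        zpow_mul, hone, one_zpow]
    rw [geomAux hne1 hpow1, zero_mul, if_neg, if_neg hdvd]
    intro h
    exact hdvd (dvd_trans ⟨2, by rw [h2rz]; ring⟩ h)

/-- For `r ≥ 3`, `ζ` a primitive `2^r`-th root of unity and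
`K = ℚ(ζ + ζ⁻¹)`, the trace of `ζ^k + ζ^{-k}` is `0`, `-2^{r-1}` or `2^{r-1}`
according to whether `gcd(k, 2^r)` is `< 2^{r-1}`, `= 2^{r-1}` or `= 2^r`. -/
theorem trace_zeta_pow_add_zeta_pow_neg
    (r : ℕ) (hr : 3 ≤ r) (ζ : ℂ) (hζ : IsPrimitiveRoot ζ (2 ^ r))
    (k : ℤ) (x : ℚ⟮ζ + ζ⁻¹⟯) (hx : (x : ℂ) = ζ ^ k + ζ ^ (-k)) :
    (Int.gcd k (2 ^ r) < 2 ^ (r - 1) → Algebra.trace ℚ ℚ⟮ζ + ζ⁻¹⟯ x = 0) ∧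
    (Int.gcd k (2 ^ r) = 2 ^ (r - 1) → Algebra.trace ℚ ℚ⟮ζ + ζ⁻¹⟯ x = -2 ^ (r - 1)) ∧
    (Int.gcd k (2 ^ r) = 2 ^ r → Algebra.trace ℚ ℚ⟮ζ + ζ⁻¹⟯ x = 2 ^ (r - 1)) := by
  have hpos : (0 : ℕ) < 2 ^ r := pow_pos (by norm_num) r
  have hζ0 : ζ ≠ 0 := hζ.ne_zero hpos.ne'
  have hζint : IsIntegral ℚ ζ := (hζ.isIntegral hpos).tower_top
  have hmul1 : ζ * ζ ^ (2 ^ r - 1) = 1 := by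
    rw [← pow_succ', Nat.sub_add_cancel hpos, hζ.pow_eq_one]
  have hinv : ζ⁻¹ = ζ ^ (2 ^ r - 1) := inv_eq_of_mul_eq_one_right hmul1
  have hcint : IsIntegral ℚ (ζ + ζ⁻¹) := by
    rw [hinv]; exact hζint.add (hζint.pow _)
  haveI hFDK : FiniteDimensional ℚ ℚ⟮ζ + ζ⁻¹⟯ := adjoin.finiteDimensional hcint
  haveI hFDL : FiniteDimensional ℚ ℚ⟮ζ⟯ := adjoin.finiteDimensional hζint
  -- complex conjugation facts
  have hnorm : ‖ζ‖ = 1 := Complex.norm_eq_one_of_pow_eq_one hζ.pow_eq_one hpos.ne'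
  have hconj : (starRingEnd ℂ) ζ = ζ⁻¹ := by
    have h1 : ζ * (starRingEnd ℂ) ζ = 1 := by
      rw [Complex.mul_conj, Complex.normSq_eq_norm_sq, hnorm]
      norm_num
    exact (inv_eq_of_mul_eq_one_right h1).symm
  -- ζ is not in the real subfield ℚ(ζ + ζ⁻¹)
  have hζK : ζ ∉ ℚ⟮ζ + ζ⁻¹⟯ := by
    intro hmem
    let F : IntermediateField ℚ ℂ := Subfield.toIntermediateField
      (RingHom.eqLocusField (starRingEnd ℂ) (RingHom.id ℂ))
      (fun q => show (starRingEnd ℂ) _ = RingHom.id ℂ _ by simp)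
    have hcF : ζ + ζ⁻¹ ∈ F := show (starRingEnd ℂ) (ζ + ζ⁻¹) = RingHom.id ℂ (ζ + ζ⁻¹) by
      rw [map_add, hconj, map_inv₀, hconj, inv_inv, RingHom.id_apply, add_comm]
    have h1 : (starRingEnd ℂ) ζ = RingHom.id ℂ ζ := adjoin_simple_le_iff.mpr hcF hmem
    rw [hconj, RingHom.id_apply] at h1
    have h2 : ζ * ζ = 1 := by nth_rewrite 2 [← h1]; exact mul_inv_cancel₀ hζ0
    have h3 : (2 : ℕ) ^ r ∣ 2 := hζ.dvd_of_pow_eq_one 2 (by rw [pow_two]; exact h2)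
    have h4 := Nat.le_of_dvd (by norm_num) h3
    have h8 : (8 : ℕ) ≤ 2 ^ r := by
      calc (8 : ℕ) = 2 ^ 3 := rfl
      _ ≤ 2 ^ r := Nat.pow_le_pow_right (by norm_num) hr
    omega
  -- the cyclotomic field
  set N : ℕ+ := ⟨2 ^ r, hpos⟩ with hN
  have hζN : IsPrimitiveRoot ζ ((N : ℕ)) := hζ
  haveI hcyc : IsCyclotomicExtension {(N : ℕ)} ℚ ℚ⟮ζ⟯ := by
    have H := adjoin_simple_toSubalgebra_of_isAlgebraic hζint.isAlgebraic
    haveI : NeZero (N : ℕ) := ⟨N.ne_zero⟩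
    refine IsCyclotomicExtension.equiv _ _ _ (h := ?_)
      (.refl : ↥(ℚ⟮ζ⟯.toSubalgebra) ≃ₐ[ℚ] _)
    rw [H]
    exact hζN.adjoin_isCyclotomicExtension ℚ
  set ζL : ℚ⟮ζ⟯ := AdjoinSimple.gen ℚ ζ with hζLdef
  have hζLcoe : (ζL : ℂ) = ζ := rfl
  have hζL : IsPrimitiveRoot ζL ((N : ℕ)) :=
    IsPrimitiveRoot.coe_submonoidClass_iff.mp hζN
  have hirr : Irreducible (cyclotomic ((N : ℕ)) ℚ) := cyclotomic.irreducible_rat hpos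
  have hζL0 : ζL ≠ 0 := fun h => hζ0 (by rw [← hζLcoe, h]; rfl)
  set xL : ℚ⟮ζ⟯ := ζL ^ k + ζL ^ (-k) with hxL
  have hcoe_zpow : ∀ m : ℤ, ((ζL ^ m : ℚ⟮ζ⟯) : ℂ) = ζ ^ m := fun m =>
    map_zpow₀ (algebraMap ℚ⟮ζ⟯ ℂ) ζL m
  have hxLcoe : (xL : ℂ) = ζ ^ k + ζ ^ (-k) := by
    rw [hxL, AddMemClass.coe_add, hcoe_zpow, hcoe_zpow]
  -- sum over embeddings
  have Esum : algebraMap ℚ ℂ (Algebra.trace ℚ ℚ⟮ζ⟯ xL) = ∑ σ : ℚ⟮ζ⟯ →ₐ[ℚ] ℂ, σ xL :=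
    trace_eq_sum_embeddings ℂ
  have hσ : ∀ σ : ℚ⟮ζ⟯ →ₐ[ℚ] ℂ, σ xL = (σ ζL) ^ k + (σ ζL) ^ (-k) := by
    intro σ
    rw [hxL, map_add, map_zpow₀, map_zpow₀]
  have hsum2 : ∑ σ : ℚ⟮ζ⟯ →ₐ[ℚ] ℂ, σ xL
      = ∑ μ ∈ primitiveRoots ((N : ℕ)) ℂ, (μ ^ k + μ ^ (-k)) := by
    calc ∑ σ : ℚ⟮ζ⟯ →ₐ[ℚ] ℂ, σ xL
        = ∑ σ : ℚ⟮ζ⟯ →ₐ[ℚ] ℂ,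
            (((hζL.embeddingsEquivPrimitiveRoots ℂ hirr σ : ℂ)) ^ k
              + ((hζL.embeddingsEquivPrimitiveRoots ℂ hirr σ : ℂ)) ^ (-k)) := by
          refine Fintype.sum_congr _ _ fun σ => ?_
          rw [hσ σ, hζL.embeddingsEquivPrimitiveRoots_apply_coe ℂ hirr σ]
      _ = ∑ μ : (primitiveRoots ((N : ℕ)) ℂ : Finset ℂ), ((μ : ℂ) ^ k + (μ : ℂ) ^ (-k)) :=
          Equiv.sum_comp (hζL.embeddingsEquivPrimitiveRoots ℂ hirr)
            (fun μ => (μ : ℂ) ^ k + (μ : ℂ) ^ (-k))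
      _ = ∑ μ ∈ primitiveRoots ((N : ℕ)) ℂ, (μ ^ k + μ ^ (-k)) :=
          Finset.sum_coe_sort (primitiveRoots ((N : ℕ)) ℂ) (fun μ => μ ^ k + μ ^ (-k))
  -- the tower ℚ ⊆ ℚ(ζ+ζ⁻¹) ⊆ ℚ(ζ)
  haveI hFDM : FiniteDimensional ℚ⟮ζ + ζ⁻¹⟯ ℚ⟮ζ + ζ⁻¹⟯⟮ζ⟯ :=
    adjoin.finiteDimensional (hζint.tower_top)
  have hres : restrictScalars ℚ ℚ⟮ζ + ζ⁻¹⟯⟮ζ⟯ = ℚ⟮ζ⟯ := by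
    erw [adjoin_adjoin_left]
    apply le_antisymm
    · rw [adjoin_le_iff]
      intro z hz
      simp only [Set.union_singleton, Set.mem_insert_iff, Set.mem_singleton_iff] at hz
      rcases hz with h | h
      · rw [h]; exact mem_adjoin_simple_self ℚ ζ
      · rw [h]
        exact add_mem (mem_adjoin_simple_self ℚ ζ) (inv_mem (mem_adjoin_simple_self ℚ ζ))
    · exact adjoin.mono ℚ _ _ (by simp)
  set xM : ℚ⟮ζ + ζ⁻¹⟯⟮ζ⟯ := algebraMap ℚ⟮ζ + ζ⁻¹⟯ ℚ⟮ζ + ζ⁻¹⟯⟮ζ⟯ x with hxM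
  have hxMcoe : (xM : ℂ) = ζ ^ k + ζ ^ (-k) := by rw [← hx]; rfl
  have hexM : (equivOfEq hres) xM = xL := by
    apply Subtype.ext
    have h1 : ((equivOfEq hres) xM : ℂ) = (xM : ℂ) := rfl
    rw [h1, hxMcoe, hxLcoe]
  have htr1 : Algebra.trace ℚ ℚ⟮ζ⟯ xL = Algebra.trace ℚ ℚ⟮ζ + ζ⁻¹⟯⟮ζ⟯ xM := by
    rw [← hexM]
    exact Algebra.trace_eq_of_algEquiv (equivOfEq hres) xM
  have hdeg : Module.finrank ℚ⟮ζ + ζ⁻¹⟯ ℚ⟮ζ + ζ⁻¹⟯⟮ζ⟯ = 2 := by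
    rw [adjoin.finrank (hζint.tower_top)]
    set c : ℚ⟮ζ + ζ⁻¹⟯ := AdjoinSimple.gen ℚ (ζ + ζ⁻¹) with hcdef
    have hcc : (algebraMap ℚ⟮ζ + ζ⁻¹⟯ ℂ c) = ζ + ζ⁻¹ := rfl
    set q : Polynomial ℚ⟮ζ + ζ⁻¹⟯ := X ^ 2 + (C (-c) * X + C 1) with hq
    have hlin : (C (-c) * X + C 1 : Polynomial ℚ⟮ζ + ζ⁻¹⟯).degree < 2 :=
      lt_of_le_of_lt degree_linear_le (by norm_num)
    have hmonic : q.Monic := monic_X_pow_add hlin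
    have hdegq : q.degree = 2 := by
      rw [hq, degree_add_eq_left_of_degree_lt (by rw [degree_X_pow]; exact_mod_cast hlin),
        degree_X_pow]
      norm_cast
    have hqdeg : q.natDegree = 2 := natDegree_eq_of_degree_eq_some hdegq
    have hq0 : (aeval ζ) q = 0 := by
      rw [hq]
      simp only [map_add, map_mul, map_pow, aeval_X, aeval_C, map_one, map_neg]
      rw [hcc]
      field_simp
      ring
    have hdvd := minpoly.dvd ℚ⟮ζ + ζ⁻¹⟯ ζ hq0
    have hle : (minpoly ℚ⟮ζ + ζ⁻¹⟯ ζ).natDegree ≤ 2 := by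
      rw [← hqdeg]
      exact natDegree_le_of_dvd hdvd hmonic.ne_zero
    have hposd : 0 < (minpoly ℚ⟮ζ + ζ⁻¹⟯ ζ).natDegree :=
      minpoly.natDegree_pos (hζint.tower_top)
    have hne1 : (minpoly ℚ⟮ζ + ζ⁻¹⟯ ζ).natDegree ≠ 1 := by
      intro h
      obtain ⟨y, hy⟩ := minpoly.natDegree_eq_one_iff.mp h
      have hmem := y.2
      rw [show ((y : ℂ)) = ζ from hy] at hmem
      exact hζK hmem
    omega
  have htr2 : Algebra.trace ℚ ℚ⟮ζ + ζ⁻¹⟯⟮ζ⟯ xM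
      = 2 * Algebra.trace ℚ ℚ⟮ζ + ζ⁻¹⟯ x := by
    rw [← Algebra.trace_trace (S := ℚ⟮ζ + ζ⁻¹⟯) xM, hxM, Algebra.trace_algebraMap, hdeg,
      map_nsmul, nsmul_eq_mul]
    norm_num
  -- main identity
  have hmain : algebraMap ℚ ℂ (2 * Algebra.trace ℚ ℚ⟮ζ + ζ⁻¹⟯ x)
      = (∑ μ ∈ primitiveRoots (2 ^ r) ℂ, μ ^ k)
        + ∑ μ ∈ primitiveRoots (2 ^ r) ℂ, μ ^ (-k) := by
    rw [← htr2, ← htr1, Esum, hsum2, ← Finset.sum_add_distrib]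
    rfl
  rw [sum_primroots_zpow r hr hζ k, sum_primroots_zpow r hr hζ (-k)] at hmain
  simp only [dvd_neg] at hmain
  -- divisibility translations
  have hgcddvd : ((Int.gcd k (2 ^ r) : ℤ)) ∣ k := Int.gcd_dvd_left _ _
  have hgpos : 0 < Int.gcd k (2 ^ r) := by
    refine Nat.pos_of_ne_zero fun h => ?_
    have := (Int.gcd_eq_zero_iff.mp h).2
    simp at this
  have hinj := (algebraMap ℚ ℂ).injective
  have hratc : ∀ q : ℚ, algebraMap ℚ ℂ q = (q : ℂ) := fun q => eq_ratCast _ q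
  have hdvd_gcd : ∀ m : ℕ, (2 : ℤ) ^ m ∣ k → m ≤ r → (2 : ℕ) ^ m ∣ Int.gcd k (2 ^ r) := by
    intro m hm hmr
    have h1 : (2 : ℤ) ^ m ∣ ((Int.gcd k (2 ^ r) : ℤ)) :=
      Int.dvd_coe_gcd hm (by exact_mod_cast pow_dvd_pow (2 : ℤ) hmr)
    have h2 : (((2 : ℕ) ^ m : ℕ) : ℤ) ∣ ((Int.gcd k (2 ^ r) : ℤ)) := by push_cast; exact h1
    exact_mod_cast h2
  refine ⟨?_, ?_, ?_⟩
  · intro hlt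
    have hnd1 : ¬ (2 : ℤ) ^ (r - 1) ∣ k := by
      intro h
      have := Nat.le_of_dvd hgpos (hdvd_gcd (r - 1) h (by omega))
      omega
    have hnd2 : ¬ (2 : ℤ) ^ r ∣ k := fun h =>
      hnd1 (dvd_trans (pow_dvd_pow (2 : ℤ) (by omega)) h)
    rw [if_neg hnd2, if_neg hnd1, add_zero] at hmain
    have h0 : algebraMap ℚ ℂ (2 * Algebra.trace ℚ ℚ⟮ζ + ζ⁻¹⟯ x) = algebraMap ℚ ℂ (2 * 0) := by
      rw [hmain, mul_zero, map_zero]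
    have := hinj h0
    exact mul_left_cancel₀ two_ne_zero this
  · intro hg
    have hd1 : (2 : ℤ) ^ (r - 1) ∣ k := by
      rw [hg] at hgcddvd
      exact_mod_cast hgcddvd
    have hnd2 : ¬ (2 : ℤ) ^ r ∣ k := by
      intro h
      have := Nat.le_of_dvd hgpos (hdvd_gcd r h le_rfl)
      have hlt : (2 : ℕ) ^ (r - 1) < 2 ^ r := Nat.pow_lt_pow_right (by norm_num) (by omega)
      omega
    rw [if_neg hnd2, if_pos hd1] at hmain
    have h0 : algebraMap ℚ ℂ (2 * Algebra.trace ℚ ℚ⟮ζ + ζ⁻¹⟯ x)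
        = algebraMap ℚ ℂ (2 * (-2 ^ (r - 1))) := by
      rw [hmain, hratc]
      push_cast
      ring
    have := hinj h0
    exact mul_left_cancel₀ two_ne_zero this
  · intro hg
    have hd1 : (2 : ℤ) ^ r ∣ k := by
      rw [hg] at hgcddvd
      exact_mod_cast hgcddvd
    rw [if_pos hd1] at hmain
    have h0 : algebraMap ℚ ℂ (2 * Algebra.trace ℚ ℚ⟮ζ + ζ⁻¹⟯ x)
        = algebraMap ℚ ℂ (2 * (2 ^ (r - 1))) := by
      rw [hmain, hratc]
      push_cast
      ring
    have := hinj h0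
    exact mul_left_cancel₀ two_ne_zero this
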